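/- Let λ, μ > 0, α > 0, 0 < M with αM < π, and u_i, v_i ∈ S^{n_i - 1} with v_i ≠ -u_i, M^2 = Σ_i k_i ∠(u_i,v_i)^2. Define λ̇ = μ cos(αM) - λ and u̇_i = (v_i - ⟨u_i, v_i⟩u_i) · (μ sin(αM) ∠(u_i,v_i))/(λ α M sin(∠(u_i,v_i))) (interpreted as 0 when ∠(u_i,v_i)=0). Then (λ + λ̇)^2 + (αλN)^2 = μ^2, where N = sqrt(Σ_i k_i ‖u̇_i‖^2). -/

import Mathlib

open Finset Real

lemma per_term {m : ℕ} (A B : ℝ) (u v : EuclideanSpace ℝ (Fin m))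
    (hu : ‖u‖ = 1) (hv : ‖v‖ = 1) (hne : v ≠ -u) :
    ‖(A * Real.arccos (inner ℝ u v : ℝ) / (B * Real.sin (Real.arccos (inner ℝ u v : ℝ)))) •
        (v - (inner ℝ u v : ℝ) • u)‖ ^ 2
      = (A / B) ^ 2 * Real.arccos (inner ℝ u v : ℝ) ^ 2 := by
  set t : ℝ := inner ℝ u v with ht
  have habs : |t| ≤ 1 := by
    have := abs_real_inner_le_norm u v
    rwa [hu, hv, one_mul] at this
  have ht1 : t ≤ 1 := (abs_le.mp habs).2
  have ht2 : -1 ≤ t := (abs_le.mp habs).1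
  have htne : t ≠ -1 := by
    intro h
    apply hne
    have : ‖v + u‖ ^ 2 = 0 := by
      rw [norm_add_sq_real, hu, hv, real_inner_comm, ← ht, h]; ring
    have h0 := pow_eq_zero_iff (n := 2) (by norm_num) |>.mp this
    have h0' := norm_eq_zero.mp h0
    rwa [add_eq_zero_iff_eq_neg] at h0'
  have hw : ‖v - t • u‖ ^ 2 = 1 - t ^ 2 := by
    rw [norm_sub_sq_real, real_inner_smul_right, real_inner_comm, ← ht, norm_smul, hu, hv]
    simp [sq_abs]; ring
  by_cases hs : Real.sin (Real.arccos t) = 0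
  · have : Real.sqrt (1 - t ^ 2) = 0 := by rwa [Real.sin_arccos] at hs
    have h1t : 1 - t ^ 2 = 0 := by
      have hnn : 0 ≤ 1 - t ^ 2 := by nlinarith [sq_abs t]
      nlinarith [Real.sq_sqrt hnn, this]
    have : t = 1 := by
      have hfac : (t - 1) * (t + 1) = 0 := by nlinarith
      rcases mul_eq_zero.mp hfac with h | h
      · linarith
      · exact absurd (by linarith) htne
    rw [this, Real.arccos_one]
    simp
  · rw [norm_smul, mul_pow, Real.norm_eq_abs, sq_abs, hw]
    have hsin2 : Real.sin (Real.arccos t) ^ 2 = 1 - t ^ 2 := by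
      rw [Real.sin_arccos, Real.sq_sqrt (by nlinarith [sq_abs t])]
    rw [← hsin2]
    by_cases hB : B = 0
    · simp [hB]
    · field_simp

theorem log_exp_radial (d : ℕ) (n : Fin d → ℕ) (k : Fin d → ℕ) (hk : ∀ i, 1 ≤ k i)
    (lam mu α M : ℝ) (hlam : 0 < lam) (hmu : 0 < mu) (hα : 0 < α)
    (hM : 0 < M) (hMπ : α * M < π)
    (u v : (i : Fin d) → EuclideanSpace ℝ (Fin (n i)))
    (hu : ∀ i, ‖u i‖ = 1) (hv : ∀ i, ‖v i‖ = 1) (hne : ∀ i, v i ≠ -u i)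
    (hM2 : M ^ 2 = ∑ i, (k i : ℝ) * Real.arccos (inner ℝ (u i) (v i) : ℝ) ^ 2) :
    (lam + (mu * Real.cos (α * M) - lam)) ^ 2
      + (α * lam * Real.sqrt (∑ i, (k i : ℝ) *
          ‖(mu * Real.sin (α * M) * Real.arccos (inner ℝ (u i) (v i) : ℝ)
              / (lam * α * M * Real.sin (Real.arccos (inner ℝ (u i) (v i) : ℝ)))) •
            (v i - (inner ℝ (u i) (v i) : ℝ) • u i)‖ ^ 2)) ^ 2
      = mu ^ 2 := by
  have hsinM : 0 < Real.sin (α * M) := Real.sin_pos_of_pos_of_lt_pi (by positivity) hMπ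
  have hsum : (∑ i, (k i : ℝ) *
      ‖(mu * Real.sin (α * M) * Real.arccos (inner ℝ (u i) (v i) : ℝ)
          / (lam * α * M * Real.sin (Real.arccos (inner ℝ (u i) (v i) : ℝ)))) •
        (v i - (inner ℝ (u i) (v i) : ℝ) • u i)‖ ^ 2)
      = (mu * Real.sin (α * M) / (lam * α * M)) ^ 2 * M ^ 2 := by
    rw [hM2, Finset.mul_sum]
    apply Finset.sum_congr rfl
    intro i _
    rw [per_term (mu * Real.sin (α * M)) (lam * α * M) (u i) (v i) (hu i) (hv i) (hne i)]
    ring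
  rw [hsum]
  have hC : 0 ≤ mu * Real.sin (α * M) / (lam * α * M) := by positivity
  rw [← mul_pow, Real.sqrt_sq (by positivity)]
  have key : α * lam * (mu * Real.sin (α * M) / (lam * α * M) * M) = mu * Real.sin (α * M) := by
    field_simp
  rw [key]
  nlinarith [Real.sin_sq_add_cos_sq (α * M)]
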